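/- Let a₀, a₁, a₂, … be complex numbers and define c₀ = 1 and c_k = Σ_{j=0}^{k−1} c_j a_{k−1−j} for k ≥ 1. Then for every r ≥ 1: conj(M_r) = B̃_r* · diag(I_r − T̃_r* T̃_r, 1) · B̃_r, where conj(M_r) is the entrywise complex conjugate of M_r and diag(A, 1) denotes the (r+1)×(r+1) block-diagonal matrix with the r×r block A in the top-left and scalar entry 1 in the bottom-right corner. -/

import Mathlib

open scoped Matrix ComplexConjugate

/-- The number of negative eigenvalues (with multiplicity) of a Hermitian complex
matrix; junk value `0` if the matrix is not Hermitian. -/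
noncomputable def negEig {n : Type*} [Fintype n] [DecidableEq n]
    (A : Matrix n n ℂ) : ℕ :=
  if h : A.IsHermitian then Nat.card {i // h.eigenvalues i < 0} else 0

/-- The number of positive eigenvalues (with multiplicity) of a Hermitian complex
matrix; junk value `0` if the matrix is not Hermitian. -/
noncomputable def posEig {n : Type*} [Fintype n] [DecidableEq n]
    (A : Matrix n n ℂ) : ℕ :=
  if h : A.IsHermitian then Nat.card {i // 0 < h.eigenvalues i} else 0

/-- The Schur kernel `K_S(w,z) = (1 - S(z) conj(S(w)))/(1 - z conj(w))`. -/
noncomputable def schurKer (S : ℂ → ℂ) (w z : ℂ) : ℂ :=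
  (1 - S z * conj (S w)) / (1 - z * conj w)

/-- A Hermitian kernel `K` has exactly `κ` negative squares on `Ω`. -/
def HasNegSquares (Ω : Set ℂ) (K : ℂ → ℂ → ℂ) (κ : ℕ) : Prop :=
  (∀ (m : ℕ) (z : Fin m → ℂ), (∀ i, z i ∈ Ω) →
      negEig (Matrix.of fun i j => K (z j) (z i)) ≤ κ) ∧
  (∃ (m : ℕ) (z : Fin m → ℂ), (∀ i, z i ∈ Ω) ∧
      negEig (Matrix.of fun i j => K (z j) (z i)) = κ)

/-- The `r×r` lower triangular Toeplitz matrix built from `a₀, a₁, …`. -/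
def Tmat (a : ℕ → ℂ) (r : ℕ) : Matrix (Fin r) (Fin r) ℂ :=
  Matrix.of fun i j => if (j : ℕ) ≤ i then a ((i : ℕ) - j) else 0

/-- The `r×r` lower triangular Toeplitz matrix built from `conj a₀, conj a₁, …`. -/
def Ttil (a : ℕ → ℂ) (r : ℕ) : Matrix (Fin r) (Fin r) ℂ :=
  Matrix.of fun i j => if (j : ℕ) ≤ i then conj (a ((i : ℕ) - j)) else 0

/-- The `r×r` Hankel matrix with entries `a_{i+j+1}`. -/
def Qmat (a : ℕ → ℂ) (r : ℕ) : Matrix (Fin r) (Fin r) ℂ :=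
  Matrix.of fun i j => a ((i : ℕ) + j + 1)

/-- The `m×m` lower triangular Toeplitz matrix built from `c₀, c₁, …`. -/
def Bmat (c : ℕ → ℂ) (m : ℕ) : Matrix (Fin m) (Fin m) ℂ :=
  Matrix.of fun i j => if (j : ℕ) ≤ i then c ((i : ℕ) - j) else 0

/-- The `m×m` lower triangular Toeplitz matrix built from `conj c₀, conj c₁, …`. -/
def Btil (c : ℕ → ℂ) (m : ℕ) : Matrix (Fin m) (Fin m) ℂ :=
  Matrix.of fun i j => if (j : ℕ) ≤ i then conj (c ((i : ℕ) - j)) else 0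

/-- The `m×m` Hermitian Toeplitz matrix built from `c₀, c₁, …`
(`M_r` of the paper has size `r+1`, i.e. it is `Mmat c (r+1)`). -/
def Mmat (c : ℕ → ℂ) (m : ℕ) : Matrix (Fin m) (Fin m) ℂ :=
  Matrix.of fun i j =>
    if (j : ℕ) ≤ i then c ((i : ℕ) - j) else conj (c ((j : ℕ) - i))

/-- The `m×m` flip matrix, with ones on the antidiagonal. -/
def Jmat (m : ℕ) : Matrix (Fin m) (Fin m) ℂ :=
  Matrix.of fun i j => if (i : ℕ) + j + 1 = m then 1 else 0

/-- Identification of `Fin m` with `Fin p ⊕ Fin q` when `m = p + q`. -/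
def splitAt {p q m : ℕ} (h : m = p + q) : Fin m → Fin p ⊕ Fin q :=
  fun i =>
    if h' : (i : ℕ) < p then Sum.inl ⟨i, h'⟩
    else Sum.inr ⟨(i : ℕ) - p, by have := i.isLt; omega⟩

/-- The `m×m` block diagonal matrix `diag(A, D)` with `A` of size `p` and `D` of
size `q`, where `m = p + q`. -/
def dblock {p q m : ℕ} (h : m = p + q)
    (A : Matrix (Fin p) (Fin p) ℂ) (D : Matrix (Fin q) (Fin q) ℂ) :
    Matrix (Fin m) (Fin m) ℂ :=
  (Matrix.fromBlocks A 0 0 D).submatrix (splitAt h) (splitAt h)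

/-- The sequence `c` belongs to the class `P_ν`: `ν(M_r) = ν` for all
sufficiently large `r`. -/
def memP (c : ℕ → ℂ) (ν : ℕ) : Prop :=
  ∃ N, ∀ r ≥ N, negEig (Mmat c (r + 1)) = ν

/-- The sequence `c` belongs to the class `P_{ν,π}`: `ν(M_r) = ν` and
`π(M_r) = π` for all sufficiently large `r`. -/
def memPP (c : ℕ → ℂ) (ν π : ℕ) : Prop :=
  ∃ N, ∀ r ≥ N, negEig (Mmat c (r + 1)) = ν ∧ posEig (Mmat c (r + 1)) = π

open Finset

private lemma sum_ite_Ico (f : ℕ → ℂ) (s t : Finset ℕ) (P : ℕ → Prop) [DecidablePred P]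
    (hst : s ⊆ t) (h1 : ∀ k ∈ t, (P k ↔ k ∈ s)) :
    ∑ k ∈ t, (if P k then f k else 0) = ∑ k ∈ s, f k := by
  rw [← Finset.sum_subset hst (fun x hx hxs => if_neg (fun hP => hxs ((h1 x hx).1 hP)))]
  exact Finset.sum_congr rfl fun k hk => if_pos ((h1 k (hst hk)).2 hk)

private lemma formA {a c : ℕ → ℂ}
    (hc : ∀ k : ℕ, c (k + 1) = ∑ j ∈ Finset.range (k + 1), c j * a (k - j))
    {p q : ℕ} (hpq : p < q) :
    ∑ k ∈ Finset.Ico (p + 1) (q + 1), a (k - 1 - p) * c (q - k) = c (q - p) := by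
  have h : c (q - p) = ∑ j ∈ Finset.range (q - p), c j * a (q - p - 1 - j) := by
    have h2 := hc (q - p - 1)
    rw [show q - p - 1 + 1 = q - p by omega] at h2
    exact h2
  rw [h]
  refine Finset.sum_nbij' (i := fun k => q - k) (j := fun j => q - j) ?_ ?_ ?_ ?_ ?_
  · intro k hk; simp only [Finset.mem_Ico] at hk ⊢; simp only [Finset.mem_range]; omega
  · intro k hk; simp only [Finset.mem_range] at hk; simp only [Finset.mem_Ico]; omega
  · intro k hk; simp only [Finset.mem_Ico] at hk; show q - (q - k) = k; omega
  · intro k hk; simp only [Finset.mem_range] at hk; show q - (q - k) = k; omega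
  · intro k hk; simp only [Finset.mem_Ico] at hk
    rw [show q - p - 1 - (q - k) = k - 1 - p by omega]
    ring

private lemma formA' {a c : ℕ → ℂ}
    (hc : ∀ k : ℕ, c (k + 1) = ∑ j ∈ Finset.range (k + 1), c j * a (k - j))
    {p q : ℕ} (hpq : p < q) :
    ∑ k ∈ Finset.Ico p q, a (q - k - 1) * c (k - p) = c (q - p) := by
  rw [← formA hc hpq]
  refine Finset.sum_nbij' (i := fun k => p + q - k) (j := fun k => p + q - k) ?_ ?_ ?_ ?_ ?_
  · intro k hk; simp only [Finset.mem_Ico] at hk ⊢; omega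
  · intro k hk; simp only [Finset.mem_Ico] at hk ⊢; omega
  · intro k hk; simp only [Finset.mem_Ico] at hk; show p + q - (p + q - k) = k; omega
  · intro k hk; simp only [Finset.mem_Ico] at hk; show p + q - (p + q - k) = k; omega
  · intro k hk; simp only [Finset.mem_Ico] at hk
    rw [show p + q - k - 1 - p = q - k - 1 by omega, show q - (p + q - k) = k - p by omega]

private lemma formB {a c : ℕ → ℂ} (hc0 : c 0 = 1)
    (hc : ∀ k : ℕ, c (k + 1) = ∑ j ∈ Finset.range (k + 1), c j * a (k - j))
    {p q : ℕ} (hpq : p < q) :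
    ∑ k ∈ Finset.Ico (p + 1) q, a (k - 1 - p) * c (q - k) = c (q - p) - a (q - 1 - p) := by
  have h := formA hc hpq
  rw [Finset.sum_Ico_succ_top (by omega : p + 1 ≤ q), show q - q = 0 by omega, hc0, mul_one] at h
  linear_combination h

private lemma sum_sigma_swap (F : ℕ → ℕ → ℂ) (i j m : ℕ) :
    ∑ k ∈ Finset.Ico (i+1) m, ∑ l ∈ Finset.Ico (max k j + 1) m, F k l
      = ∑ l ∈ Finset.Ico (max i j + 1) m, ∑ k ∈ Finset.Ico (i+1) l, F k l := by
  rw [Finset.sum_sigma', Finset.sum_sigma']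
  refine Finset.sum_nbij' (i := fun x => ⟨x.2, x.1⟩) (j := fun x => ⟨x.2, x.1⟩) ?_ ?_ ?_ ?_ ?_
  · intro x hx; simp only [Finset.mem_sigma, Finset.mem_Ico] at hx ⊢; omega
  · intro x hx; simp only [Finset.mem_sigma, Finset.mem_Ico] at hx ⊢; omega
  · intro x _; rfl
  · intro x _; rfl
  · intro x _; rfl

private def Nmat (a : ℕ → ℂ) (m : ℕ) : Matrix (Fin m) (Fin m) ℂ :=
  Matrix.of fun i j => if (j : ℕ) < i then conj (a ((i : ℕ) - j - 1)) else 0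

private lemma mul_apply_range {m : ℕ} {A B : Matrix (Fin m) (Fin m) ℂ} {i j : Fin m} {f : ℕ → ℂ}
    (hf : ∀ k : Fin m, A i k * B k j = f (k : ℕ)) :
    (A * B) i j = ∑ k ∈ Finset.range m, f k := by
  rw [Matrix.mul_apply, ← Fin.sum_univ_eq_sum_range]
  exact Finset.sum_congr rfl fun k _ => hf k

private lemma Binv_nat {a c : ℕ → ℂ} (hc0 : c 0 = 1)
    (hc : ∀ k : ℕ, c (k + 1) = ∑ j ∈ Finset.range (k + 1), c j * a (k - j))
    {m i j : ℕ} (hi : i < m) (hj : j < m) :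
    ∑ k ∈ Finset.range m,
      ((if i = k then (1:ℂ) else 0) - (if k < i then conj (a (i - k - 1)) else 0)) *
        (if j ≤ k then conj (c (k - j)) else 0)
    = if i = j then 1 else 0 := by
  have e : ∀ k ∈ Finset.range m,
      ((if i = k then (1:ℂ) else 0) - (if k < i then conj (a (i - k - 1)) else 0)) *
        (if j ≤ k then conj (c (k - j)) else 0)
      = (if i = k then (if j ≤ k then conj (c (k - j)) else 0) else 0)
          - (if j ≤ k ∧ k < i then conj (a (i - k - 1)) * conj (c (k - j)) else 0) := by
    intro k _
    by_cases h1 : i = k <;> by_cases h2 : j ≤ k <;> by_cases h3 : k < i  <;>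
      simp [h1, h2, h3]
  rw [Finset.sum_congr rfl e, Finset.sum_sub_distrib, Finset.sum_ite_eq (Finset.range m) i,
    if_pos (Finset.mem_range.mpr hi)]
  rw [sum_ite_Ico (fun k => conj (a (i - k - 1)) * conj (c (k - j))) (Finset.Ico j i)
      (Finset.range m) (fun k => j ≤ k ∧ k < i)
      (by intro x hx; simp only [Finset.mem_Ico] at hx; exact Finset.mem_range.mpr (by omega))
      (fun k _ => (Finset.mem_Ico (a := j) (b := i)).symm.trans Iff.rfl |>.symm.symm)]
  rcases lt_trichotomy i j with h | h | h
  · rw [Finset.Ico_eq_empty (by omega), Finset.sum_empty, if_neg (by omega), if_neg (by omega),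
      sub_zero]
  · subst h
    rw [Finset.Ico_self, Finset.sum_empty, if_pos le_rfl, if_pos rfl, sub_zero,
      Nat.sub_self, hc0, map_one]
  · rw [show (∑ k ∈ Finset.Ico j i, conj (a (i - k - 1)) * conj (c (k - j)))
        = conj (∑ k ∈ Finset.Ico j i, a (i - k - 1) * c (k - j)) by
      simp only [map_sum, map_mul]]
    rw [formA' hc h, if_pos (by omega), if_neg (by omega), sub_self]

private lemma Binv {a c : ℕ → ℂ} (hc0 : c 0 = 1)
    (hc : ∀ k : ℕ, c (k + 1) = ∑ j ∈ Finset.range (k + 1), c j * a (k - j))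
    (m : ℕ) : (1 - Nmat a m) * Btil c m = 1 := by
  ext i j
  rw [mul_apply_range (f := fun k =>
      ((if (i:ℕ) = k then (1:ℂ) else 0) - (if k < (i:ℕ) then conj (a ((i:ℕ) - k - 1)) else 0)) *
        (if (j:ℕ) ≤ k then conj (c (k - (j:ℕ))) else 0))
    (fun k => by simp [Nmat, Btil, Matrix.sub_apply, Matrix.one_apply, Fin.ext_iff])]
  rw [Binv_nat hc0 hc i.isLt j.isLt]
  simp [Matrix.one_apply, Fin.ext_iff]

private noncomputable def Pmat (a c : ℕ → ℂ) (m : ℕ) : Matrix (Fin m) (Fin m) ℂ :=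
  Matrix.of fun i j =>
    (if (i : ℕ) ≤ j then c ((j : ℕ) - i) else 0)
      - ∑ l ∈ Finset.Ico (max (i : ℕ) (j : ℕ) + 1) m, c (l - (i : ℕ)) * conj (a (l - 1 - (j : ℕ)))

private lemma hP_nat {a c : ℕ → ℂ} (hc0 : c 0 = 1)
    (hc : ∀ k : ℕ, c (k + 1) = ∑ j ∈ Finset.range (k + 1), c j * a (k - j))
    {m i j : ℕ} (hi : i < m) (hj : j < m) :
    ∑ k ∈ Finset.range m,
      (if k ≤ i then conj (c (i - k)) else c (k - i)) *
        ((if k = j then (1:ℂ) else 0) - (if j < k then conj (a (k - j - 1)) else 0))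
    = (if i ≤ j then c (j - i) else 0)
        - ∑ l ∈ Finset.Ico (max i j + 1) m, c (l - i) * conj (a (l - 1 - j)) := by
  have e : ∀ k ∈ Finset.range m,
      (if k ≤ i then conj (c (i - k)) else c (k - i)) *
        ((if k = j then (1:ℂ) else 0) - (if j < k then conj (a (k - j - 1)) else 0))
      = (if k = j then (if k ≤ i then conj (c (i - k)) else c (k - i)) else 0)
          - (if j < k then
              (if k ≤ i then conj (c (i - k)) else c (k - i)) * conj (a (k - j - 1)) else 0) := by
    intro k _
    by_cases h1 : k = j <;> by_cases h2 : j < k <;> simp [h1, h2] <;> ring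
  rw [Finset.sum_congr rfl e, Finset.sum_sub_distrib, Finset.sum_ite_eq' (Finset.range m) j,
    if_pos (Finset.mem_range.mpr hj)]
  rw [sum_ite_Ico (fun k => (if k ≤ i then conj (c (i - k)) else c (k - i)) * conj (a (k - j - 1)))
      (Finset.Ico (j + 1) m) (Finset.range m) (fun k => j < k)
      (by intro x hx; simp only [Finset.mem_Ico] at hx; exact Finset.mem_range.mpr (by omega))
      (fun k hk => by simp only [Finset.mem_Ico, Finset.mem_range] at *; omega)]
  rcases le_or_gt i j with h | h
  · -- i ≤ j
    have e2 : ∀ k ∈ Finset.Ico (j + 1) m,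
        (if k ≤ i then conj (c (i - k)) else c (k - i)) * conj (a (k - j - 1))
        = c (k - i) * conj (a (k - 1 - j)) := by
      intro k hk; simp only [Finset.mem_Ico] at hk
      rw [if_neg (by omega), show k - j - 1 = k - 1 - j by omega]
    rw [Finset.sum_congr rfl e2, show max i j = j by omega]
    congr 1
    rcases eq_or_lt_of_le h with h' | h'
    · subst h'; simp [hc0]
    · rw [if_neg (by omega), if_pos h]
  · -- j < i
    rw [show max i j = i by omega,
      ← Finset.sum_Ico_consecutive _ (by omega : j + 1 ≤ i + 1) (by omega : i + 1 ≤ m)]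
    have e2 : ∀ k ∈ Finset.Ico (j + 1) (i + 1),
        (if k ≤ i then conj (c (i - k)) else c (k - i)) * conj (a (k - j - 1))
        = conj (a (k - 1 - j) * c (i - k)) := by
      intro k hk; simp only [Finset.mem_Ico] at hk
      rw [if_pos (by omega), show k - j - 1 = k - 1 - j by omega, map_mul]; ring
    have e3 : ∀ k ∈ Finset.Ico (i + 1) m,
        (if k ≤ i then conj (c (i - k)) else c (k - i)) * conj (a (k - j - 1))
        = c (k - i) * conj (a (k - 1 - j)) := by
      intro k hk; simp only [Finset.mem_Ico] at hk
      rw [if_neg (by omega), show k - j - 1 = k - 1 - j by omega]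
    rw [Finset.sum_congr rfl e2, Finset.sum_congr rfl e3, ← map_sum, formA hc h,
      if_pos (by omega), if_neg (by omega)]
    ring

private lemma hP {a c : ℕ → ℂ} (hc0 : c 0 = 1)
    (hc : ∀ k : ℕ, c (k + 1) = ∑ j ∈ Finset.range (k + 1), c j * a (k - j))
    (m : ℕ) : (Mmat c m).map (starRingEnd ℂ) * (1 - Nmat a m) = Pmat a c m := by
  ext i j
  rw [mul_apply_range (f := fun k =>
      (if k ≤ (i:ℕ) then conj (c ((i:ℕ) - k)) else c (k - (i:ℕ))) *
        ((if k = (j:ℕ) then (1:ℂ) else 0) - (if (j:ℕ) < k then conj (a (k - (j:ℕ) - 1)) else 0)))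
    (fun k => by
      simp only [Mmat, Nmat, Matrix.map_apply, Matrix.of_apply, Matrix.sub_apply,
        Matrix.one_apply, Fin.ext_iff, Fin.le_def, Fin.lt_def,
        apply_ite (starRingEnd ℂ), Complex.conj_conj, map_one, map_zero])]
  rw [hP_nat hc0 hc i.isLt j.isLt]
  rfl

private lemma hKey_nat {a c : ℕ → ℂ} (hc0 : c 0 = 1)
    (hc : ∀ k : ℕ, c (k + 1) = ∑ j ∈ Finset.range (k + 1), c j * a (k - j))
    {m i j : ℕ} (hi : i < m) (hj : j < m) (G : ℕ → ℂ)
    (hGdef : ∀ k, G k = (if k ≤ j then c (j - k) else 0)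
      - ∑ l ∈ Finset.Ico (max k j + 1) m, c (l - k) * conj (a (l - 1 - j))) :
    ∑ k ∈ Finset.range m,
      ((if k = i then (1:ℂ) else 0) - (if i < k then a (k - i - 1) else 0)) * G k
    = (if i = j then 1 else 0)
        - ∑ l ∈ Finset.Ico (max i j + 1) m, a (l - 1 - i) * conj (a (l - 1 - j)) := by
  have e : ∀ k ∈ Finset.range m,
      ((if k = i then (1:ℂ) else 0) - (if i < k then a (k - i - 1) else 0)) * G k
      = (if k = i then G k else 0) - (if i < k then a (k - i - 1) * G k else 0) := by
    intro k _
    by_cases h1 : k = i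
    · subst h1; rw [if_pos rfl, if_pos rfl, if_neg (lt_irrefl k), if_neg (lt_irrefl k),
        sub_zero, sub_zero, one_mul]
    · rw [if_neg h1, if_neg h1]
      by_cases h2 : i < k
      · rw [if_pos h2, if_pos h2]; ring
      · rw [if_neg h2, if_neg h2]; ring
  rw [Finset.sum_congr rfl e, Finset.sum_sub_distrib,
    Finset.sum_ite_eq' (Finset.range m) i, if_pos (Finset.mem_range.mpr hi)]
  rw [sum_ite_Ico (fun k => a (k - i - 1) * G k) (Finset.Ico (i+1) m) (Finset.range m)
      (fun k => i < k)
      (by intro x hx; simp only [Finset.mem_Ico] at hx; exact Finset.mem_range.mpr (by omega))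
      (fun k hk => by simp only [Finset.mem_range, Finset.mem_Ico] at *; omega)]
  have hsplit : ∑ k ∈ Finset.Ico (i+1) m, a (k - i - 1) * G k
      = (∑ k ∈ Finset.Ico (i+1) m, (if k ≤ j then a (k - i - 1) * c (j - k) else 0))
        - ∑ k ∈ Finset.Ico (i+1) m, ∑ l ∈ Finset.Ico (max k j + 1) m,
            a (k - i - 1) * (c (l - k) * conj (a (l - 1 - j))) := by
    rw [← Finset.sum_sub_distrib]
    refine Finset.sum_congr rfl fun k _ => ?_
    rw [hGdef k, mul_sub, Finset.mul_sum, mul_ite, mul_zero]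
  rw [hsplit]
  have hS2a : ∑ k ∈ Finset.Ico (i+1) m, (if k ≤ j then a (k - i - 1) * c (j - k) else 0)
      = if i < j then c (j - i) else 0 := by
    rw [sum_ite_Ico (fun k => a (k - i - 1) * c (j - k)) (Finset.Ico (i+1) (j+1))
        (Finset.Ico (i+1) m) (fun k => k ≤ j)
        (by intro x hx; simp only [Finset.mem_Ico] at hx ⊢; omega)
        (fun k hk => by simp only [Finset.mem_Ico] at *; omega)]
    by_cases h : i < j
    · rw [if_pos h, ← formA hc h]
      exact Finset.sum_congr rfl fun k hk => by
        simp only [Finset.mem_Ico] at hk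
        rw [show k - i - 1 = k - 1 - i by omega]
    · rw [if_neg h, Finset.Ico_eq_empty (by omega), Finset.sum_empty]
  have hS2b : ∑ k ∈ Finset.Ico (i+1) m, ∑ l ∈ Finset.Ico (max k j + 1) m,
        a (k - i - 1) * (c (l - k) * conj (a (l - 1 - j)))
      = ∑ l ∈ Finset.Ico (max i j + 1) m,
          (c (l - i) - a (l - 1 - i)) * conj (a (l - 1 - j)) := by
    rw [sum_sigma_swap (fun k l => a (k - i - 1) * (c (l - k) * conj (a (l - 1 - j))))]
    refine Finset.sum_congr rfl fun l hl => ?_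
    simp only [Finset.mem_Ico] at hl
    have hil : i < l := by omega
    rw [show ∑ k ∈ Finset.Ico (i+1) l, a (k - i - 1) * (c (l - k) * conj (a (l - 1 - j)))
        = (∑ k ∈ Finset.Ico (i+1) l, a (k - 1 - i) * c (l - k)) * conj (a (l - 1 - j)) by
      rw [Finset.sum_mul]
      exact Finset.sum_congr rfl fun k hk => by
        rw [show k - i - 1 = k - 1 - i by omega]; ring]
    rw [formB hc0 hc hil]
  rw [hS2a, hS2b, hGdef i]
  have hXY : (if i ≤ j then c (j - i) else 0) - (if i < j then c (j - i) else 0)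
      = (if i = j then (1:ℂ) else 0) := by
    rcases lt_trichotomy i j with h | h | h
    · rw [if_pos (le_of_lt h), if_pos h, if_neg (by omega), sub_self]
    · subst h; simp [hc0]
    · rw [if_neg (by omega), if_neg (by omega), if_neg (by omega), sub_zero]
  have hSS : (∑ l ∈ Finset.Ico (max i j + 1) m, c (l - i) * conj (a (l - 1 - j)))
      - ∑ l ∈ Finset.Ico (max i j + 1) m, (c (l - i) - a (l - 1 - i)) * conj (a (l - 1 - j))
      = ∑ l ∈ Finset.Ico (max i j + 1) m, a (l - 1 - i) * conj (a (l - 1 - j)) := by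
    rw [← Finset.sum_sub_distrib]
    exact Finset.sum_congr rfl fun l _ => by ring
  linear_combination hXY - hSS

private noncomputable def Emat (a : ℕ → ℂ) (m : ℕ) : Matrix (Fin m) (Fin m) ℂ :=
  Matrix.of fun i j =>
    (if (i : ℕ) = (j : ℕ) then 1 else 0)
      - ∑ l ∈ Finset.Ico (max (i : ℕ) (j : ℕ) + 1) m,
          a (l - 1 - (i : ℕ)) * conj (a (l - 1 - (j : ℕ)))

private lemma hKey {a c : ℕ → ℂ} (hc0 : c 0 = 1)
    (hc : ∀ k : ℕ, c (k + 1) = ∑ j ∈ Finset.range (k + 1), c j * a (k - j))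
    (m : ℕ) : (1 - Nmat a m)ᴴ * Pmat a c m = Emat a m := by
  ext i j
  rw [mul_apply_range (f := fun k =>
      ((if k = (i:ℕ) then (1:ℂ) else 0) - (if (i:ℕ) < k then a (k - (i:ℕ) - 1) else 0)) *
        ((if k ≤ (j:ℕ) then c ((j:ℕ) - k) else 0)
          - ∑ l ∈ Finset.Ico (max k (j:ℕ) + 1) m, c (l - k) * conj (a (l - 1 - (j:ℕ)))))
    (fun k => by
      simp only [Matrix.conjTranspose_apply, Matrix.sub_apply, Matrix.one_apply, Nmat, Pmat,
        Matrix.of_apply, Complex.star_def, map_sub, apply_ite (starRingEnd ℂ),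
        Complex.conj_conj, map_one, map_zero, Fin.ext_iff, Fin.lt_def, Fin.le_def, eq_comm])]
  rw [hKey_nat hc0 hc i.isLt j.isLt _ (fun k => rfl)]
  rfl

private lemma hDnat (a : ℕ → ℂ) {r i j : ℕ} (hi : i < r) (hj : j < r) :
    ∑ k ∈ Finset.range r, (if i ≤ k then a (k - i) else 0) * (if j ≤ k then conj (a (k - j)) else 0)
    = ∑ l ∈ Finset.Ico (max i j + 1) (r + 1), a (l - 1 - i) * conj (a (l - 1 - j)) := by
  have e : ∀ k ∈ Finset.range r,
      (if i ≤ k then a (k - i) else 0) * (if j ≤ k then conj (a (k - j)) else 0)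
      = if max i j ≤ k then a (k - i) * conj (a (k - j)) else 0 := by
    intro k _
    rcases le_or_gt i k with h1 | h1 <;> rcases le_or_gt j k with h2 | h2
    · rw [if_pos h1, if_pos h2, if_pos (by omega)]
    · rw [if_pos h1, if_neg (by omega), if_neg (by omega), mul_zero]
    · rw [if_neg (by omega : ¬ i ≤ k), zero_mul, if_neg (by omega)]
    · rw [if_neg (by omega : ¬ i ≤ k), zero_mul, if_neg (by omega)]
  rw [Finset.sum_congr rfl e]
  rw [sum_ite_Ico (fun k => a (k - i) * conj (a (k - j))) (Finset.Ico (max i j) r)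
      (Finset.range r) (fun k => max i j ≤ k)
      (by intro x hx; simp only [Finset.mem_Ico] at hx; exact Finset.mem_range.mpr (by omega))
      (fun k hk => by simp only [Finset.mem_range, Finset.mem_Ico] at *; omega)]
  refine Finset.sum_nbij' (i := fun k => k + 1) (j := fun l => l - 1) ?_ ?_ ?_ ?_ ?_
  · intro k hk; simp only [Finset.mem_Ico] at hk ⊢; omega
  · intro l hl; simp only [Finset.mem_Ico] at hl ⊢; omega
  · intro k hk; simp only [Finset.mem_Ico] at hk; show k + 1 - 1 = k; omega
  · intro l hl; simp only [Finset.mem_Ico] at hl; show l - 1 + 1 = l; omega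
  · intro k hk; simp only [Finset.mem_Ico] at hk
    rw [show k + 1 - 1 - i = k - i by omega, show k + 1 - 1 - j = k - j by omega]

private lemma hD (a : ℕ → ℂ) (r : ℕ) :
    dblock (rfl : r + 1 = r + 1) (1 - (Ttil a r)ᴴ * Ttil a r)
      (1 : Matrix (Fin 1) (Fin 1) ℂ) = Emat a (r + 1) := by
  ext i j
  simp only [dblock, Matrix.submatrix_apply, splitAt]
  by_cases hi : (i : ℕ) < r <;> by_cases hj : (j : ℕ) < r
  · rw [dif_pos hi, dif_pos hj, Matrix.fromBlocks_apply₁₁]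
    rw [Matrix.sub_apply, Matrix.one_apply]
    rw [show ((Ttil a r)ᴴ * Ttil a r) ⟨(i:ℕ), hi⟩ ⟨(j:ℕ), hj⟩
        = ∑ k ∈ Finset.range r, (if (i:ℕ) ≤ k then a (k - (i:ℕ)) else 0) *
            (if (j:ℕ) ≤ k then conj (a (k - (j:ℕ))) else 0) from
      mul_apply_range (fun k => by
        simp only [Matrix.conjTranspose_apply, Ttil, Matrix.of_apply, Complex.star_def,
          apply_ite (starRingEnd ℂ), Complex.conj_conj, map_zero, Fin.le_def])]
    rw [hDnat a hi hj]
    simp only [Emat, Matrix.of_apply, Fin.ext_iff]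
  · have hj' : (j : ℕ) = r := by omega
    rw [dif_pos hi, dif_neg hj, Matrix.fromBlocks_apply₁₂]
    simp only [Emat, Matrix.of_apply, Matrix.zero_apply]
    rw [show max (i:ℕ) (j:ℕ) = r by omega, Finset.Ico_self, Finset.sum_empty,
      if_neg (by omega), sub_zero]
  · have hi' : (i : ℕ) = r := by omega
    rw [dif_neg hi, dif_pos hj, Matrix.fromBlocks_apply₂₁]
    simp only [Emat, Matrix.of_apply, Matrix.zero_apply]
    rw [show max (i:ℕ) (j:ℕ) = r by omega, Finset.Ico_self, Finset.sum_empty,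
      if_neg (by omega), sub_zero]
  · rw [dif_neg hi, dif_neg hj, Matrix.fromBlocks_apply₂₂]
    simp only [Emat, Matrix.of_apply]
    rw [show max (i:ℕ) (j:ℕ) = r by omega, Finset.Ico_self, Finset.sum_empty,
      if_pos (by omega), sub_zero, Matrix.one_apply, if_pos (Subsingleton.elim _ _)]

/-- `conj(M_r) = B̃_r* diag(I_r - T̃_r* T̃_r, 1) B̃_r`. -/
theorem conj_Mmat_eq_Btil_dblock_mul
    (a c : ℕ → ℂ) (hc0 : c 0 = 1)
    (hc : ∀ k : ℕ, c (k + 1) = ∑ j ∈ Finset.range (k + 1), c j * a (k - j))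
    (r : ℕ) (hr : 1 ≤ r) :
    (Mmat c (r + 1)).map (starRingEnd ℂ) =
      (Btil c (r + 1))ᴴ *
        dblock (by omega) (1 - (Ttil a r)ᴴ * Ttil a r)
          (1 : Matrix (Fin 1) (Fin 1) ℂ) *
        Btil c (r + 1) := by
  have hL : (1 - Nmat a (r+1)) * Btil c (r+1) = 1 := Binv hc0 hc (r+1)
  have hK : (1 - Nmat a (r+1))ᴴ *
      ((Mmat c (r+1)).map (starRingEnd ℂ) * (1 - Nmat a (r+1))) = Emat a (r+1) := by
    rw [hP hc0 hc (r+1)]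
    exact hKey hc0 hc (r+1)
  have hDd : dblock (by omega : r + 1 = r + 1) (1 - (Ttil a r)ᴴ * Ttil a r)
      (1 : Matrix (Fin 1) (Fin 1) ℂ) = Emat a (r + 1) := hD a r
  rw [hDd, ← hK]
  have hassoc : (Btil c (r+1))ᴴ * ((1 - Nmat a (r+1))ᴴ *
        ((Mmat c (r+1)).map (starRingEnd ℂ) * (1 - Nmat a (r+1)))) * Btil c (r+1)
      = ((1 - Nmat a (r+1)) * Btil c (r+1))ᴴ * (Mmat c (r+1)).map (starRingEnd ℂ) *
          ((1 - Nmat a (r+1)) * Btil c (r+1)) := by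
    rw [Matrix.conjTranspose_mul]
    simp only [Matrix.mul_assoc]
  rw [hassoc, hL]
  simp
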